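/- Every rational formal power series over ℂ lies in the ℂ-linear span of the monomials and of the powers of geometric series: if S ∈ ℂ[[X]] and there exist polynomials p, q ∈ ℂ[X] with q(0) ≠ 0 and q·S = p in ℂ[[X]], then S belongs to the ℂ-linear span of the set {X^k : k ∈ ℕ} ∪ {((1 − αX)^{-1})^l : α ∈ ℂ ∖ {0}, l ≥ 1}, where (1 − αX)^{-1} is the multiplicative inverse of 1 − αX in ℂ[[X]]. -/

import Mathlib

open PowerSeries

noncomputable abbrev Mgen : Set (PowerSeries ℂ) :=
  ((Set.range fun k : ℕ => (PowerSeries.X : PowerSeries ℂ) ^ k) ∪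
       {f : PowerSeries ℂ | ∃ α : ℂ, α ≠ 0 ∧ ∃ l : ℕ, 1 ≤ l ∧
          f = ((1 - PowerSeries.C α * PowerSeries.X)⁻¹) ^ l})

noncomputable abbrev Msub : Submodule ℂ (PowerSeries ℂ) := Submodule.span ℂ Mgen

lemma geom_mem {α : ℂ} (hα : α ≠ 0) (l : ℕ) (hl : 1 ≤ l) :
    ((1 - PowerSeries.C α * PowerSeries.X)⁻¹) ^ l ∈ Msub :=
  Submodule.subset_span (Or.inr ⟨α, hα, l, hl, rfl⟩)

lemma Xpow_mem (k : ℕ) : (PowerSeries.X : PowerSeries ℂ) ^ k ∈ Msub :=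
  Submodule.subset_span (Or.inl ⟨k, rfl⟩)

lemma geom_mul_Xpow {α : ℂ} (hα : α ≠ 0) (k : ℕ) :
    (1 - PowerSeries.C α * PowerSeries.X)⁻¹ * PowerSeries.X ^ k ∈ Msub := by
  induction k with
  | zero => simpa using geom_mem hα 1 le_rfl
  | succ k ih =>
      set G : PowerSeries ℂ := 1 - PowerSeries.C α * PowerSeries.X with hG
      have h1 : G⁻¹ * G = 1 := PowerSeries.inv_mul_cancel _ (by simp [hG])
      have h2 : PowerSeries.C α * (G⁻¹ * PowerSeries.X ^ (k+1))
          = G⁻¹ * PowerSeries.X ^ k - PowerSeries.X ^ k := by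
        have hx : PowerSeries.C α * PowerSeries.X = 1 - G := by rw [hG]; ring
        calc PowerSeries.C α * (G⁻¹ * PowerSeries.X ^ (k+1))
            = G⁻¹ * (PowerSeries.C α * PowerSeries.X) * PowerSeries.X ^ k := by ring
          _ = (G⁻¹ - 1) * PowerSeries.X ^ k := by rw [hx, mul_sub, mul_one, h1]
          _ = G⁻¹ * PowerSeries.X ^ k - PowerSeries.X ^ k := by ring
      have key : G⁻¹ * PowerSeries.X ^ (k+1)
          = α⁻¹ • (G⁻¹ * PowerSeries.X ^ k - PowerSeries.X ^ k) := by
        rw [← h2, ← PowerSeries.smul_eq_C_mul, smul_smul, inv_mul_cancel₀ hα, one_smul]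
      rw [key]
      exact Submodule.smul_mem _ _ (Submodule.sub_mem _ ih (Xpow_mem k))

lemma geom_mul_geom {α γ : ℂ} (hα : α ≠ 0) (hγ : γ ≠ 0) (l : ℕ) (hl : 1 ≤ l) :
    (1 - PowerSeries.C α * PowerSeries.X)⁻¹ *
      ((1 - PowerSeries.C γ * PowerSeries.X)⁻¹) ^ l ∈ Msub := by
  set G : PowerSeries ℂ := 1 - PowerSeries.C α * PowerSeries.X with hGdef
  set H : PowerSeries ℂ := 1 - PowerSeries.C γ * PowerSeries.X with hHdef
  by_cases hαγ : α = γ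
  · subst hαγ
    have : G⁻¹ * (G⁻¹) ^ l = (G⁻¹) ^ (l+1) := by ring
    rw [this]
    exact geom_mem hα (l+1) (by omega)
  · have hGc : constantCoeff G ≠ 0 := by simp [hGdef]
    have hHc : constantCoeff H ≠ 0 := by simp [hHdef]
    have hGu : G⁻¹ * G = 1 := PowerSeries.inv_mul_cancel _ hGc
    have hHu : H⁻¹ * H = 1 := PowerSeries.inv_mul_cancel _ hHc
    have hsub : α - γ ≠ 0 := sub_ne_zero.mpr hαγ
    -- partial fraction base identity
    have base : G⁻¹ * H⁻¹ = (α/(α-γ)) • G⁻¹ + (-γ/(α-γ)) • H⁻¹ := by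
      have hne : G * H ≠ 0 := by
        intro h
        rcases mul_eq_zero.mp h with h' | h'
        · exact hGc (by rw [h']; simp)
        · exact hHc (by rw [h']; simp)
      apply mul_left_cancel₀ hne
      have lhs : G * H * (G⁻¹ * H⁻¹) = 1 := by
        calc G * H * (G⁻¹ * H⁻¹) = (G⁻¹ * G) * (H⁻¹ * H) := by ring
          _ = 1 := by rw [hGu, hHu, one_mul]
      rw [lhs]
      rw [mul_add, PowerSeries.smul_eq_C_mul, PowerSeries.smul_eq_C_mul]
      have e1 : G * H * (PowerSeries.C (α/(α-γ)) * G⁻¹)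
          = PowerSeries.C (α/(α-γ)) * H := by
        calc G * H * (PowerSeries.C (α/(α-γ)) * G⁻¹)
            = PowerSeries.C (α/(α-γ)) * (G⁻¹ * G) * H := by ring
          _ = _ := by rw [hGu, mul_one]
      have e2 : G * H * (PowerSeries.C (-γ/(α-γ)) * H⁻¹)
          = PowerSeries.C (-γ/(α-γ)) * G := by
        calc G * H * (PowerSeries.C (-γ/(α-γ)) * H⁻¹)
            = PowerSeries.C (-γ/(α-γ)) * (H⁻¹ * H) * G := by ring
          _ = _ := by rw [hHu, mul_one]
      rw [e1, e2, hGdef, hHdef]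
      have hA : (α/(α-γ)) + (-γ/(α-γ)) = 1 := by field_simp; ring
      have hB : (α/(α-γ)) * γ + (-γ/(α-γ)) * α = 0 := by field_simp; ring
      have expand : PowerSeries.C (α/(α-γ)) * (1 - PowerSeries.C γ * PowerSeries.X)
          + PowerSeries.C (-γ/(α-γ)) * (1 - PowerSeries.C α * PowerSeries.X)
          = PowerSeries.C ((α/(α-γ)) + (-γ/(α-γ)))
            - PowerSeries.C ((α/(α-γ)) * γ + (-γ/(α-γ)) * α) * PowerSeries.X := by
        simp only [map_add, map_mul]
        ring
      rw [expand, hA, hB]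
      simp
    induction l with
    | zero => omega
    | succ l ih =>
        rcases Nat.eq_or_lt_of_le hl with h1 | h1
        · rw [← h1]
          have hGm : G⁻¹ ∈ Msub := by simpa using geom_mem hα 1 le_rfl
          have hHm : H⁻¹ ∈ Msub := by simpa using geom_mem hγ 1 le_rfl
          have hsum := Submodule.add_mem Msub
            (Submodule.smul_mem Msub (α/(α-γ)) hGm)
            (Submodule.smul_mem Msub (-γ/(α-γ)) hHm)
          rw [← base] at hsum
          simpa using hsum
        · have hl' : 1 ≤ l := by omega
          have step : G⁻¹ * (H⁻¹) ^ (l+1)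
              = (α/(α-γ)) • (G⁻¹ * (H⁻¹) ^ l) + (-γ/(α-γ)) • (H⁻¹) ^ (l+1) := by
            calc G⁻¹ * (H⁻¹) ^ (l+1) = (G⁻¹ * H⁻¹) * (H⁻¹) ^ l := by ring
              _ = ((α/(α-γ)) • G⁻¹ + (-γ/(α-γ)) • H⁻¹) * (H⁻¹) ^ l := by rw [base]
              _ = _ := by
                  rw [add_mul, smul_mul_assoc, smul_mul_assoc]
                  congr 1
                  rw [← pow_succ']
          rw [step]
          exact Submodule.add_mem _
            (Submodule.smul_mem _ _ (ih hl'))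
            (Submodule.smul_mem _ _ (geom_mem hγ (l+1) (by omega)))

lemma geom_mul_mem {α : ℂ} (hα : α ≠ 0) {f : PowerSeries ℂ} (hf : f ∈ Msub) :
    (1 - PowerSeries.C α * PowerSeries.X)⁻¹ * f ∈ Msub := by
  induction hf using Submodule.span_induction with
  | mem x hx =>
      rcases hx with ⟨k, rfl⟩ | ⟨γ, hγ, l, hl, rfl⟩
      · exact geom_mul_Xpow hα k
      · exact geom_mul_geom hα hγ l hl
  | zero => simpa using Submodule.zero_mem Msub
  | add x y _ _ hx hy => rw [mul_add]; exact Submodule.add_mem _ hx hy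
  | smul c x _ hx => rw [mul_smul_comm]; exact Submodule.smul_mem _ _ hx

lemma poly_mem (p : Polynomial ℂ) : (↑p : PowerSeries ℂ) ∈ Msub := by
  induction p using Polynomial.induction_on' with
  | add f g hf hg => rw [Polynomial.coe_add]; exact Submodule.add_mem _ hf hg
  | monomial n a =>
      have : ((Polynomial.monomial n a : Polynomial ℂ) : PowerSeries ℂ)
          = a • (PowerSeries.X : PowerSeries ℂ) ^ n := by
        rw [Polynomial.coe_monomial, PowerSeries.smul_eq_C_mul]
        ext m
        simp [PowerSeries.coeff_X_pow, PowerSeries.coeff_monomial]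
      rw [this]
      exact Submodule.smul_mem _ _ (Xpow_mem n)

lemma main_aux (n : ℕ) : ∀ q : Polynomial ℂ, q.natDegree = n →
    Polynomial.eval 0 q ≠ 0 → ∀ p : Polynomial ℂ, ∀ S : PowerSeries ℂ,
    (↑q : PowerSeries ℂ) * S = ↑p → S ∈ Msub := by
  induction n using Nat.strong_induction_on with
  | _ n IH =>
    intro q hdeg hq0 p S hqS
    rcases Nat.eq_zero_or_pos n with hn | hn
    · -- q is a nonzero constant
      have hqC : q = Polynomial.C (q.coeff 0) :=
        Polynomial.eq_C_of_natDegree_eq_zero (hdeg.trans hn)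
      have hc : q.coeff 0 ≠ 0 := by
        intro h
        apply hq0
        rw [hqC, h]; simp
      have : (PowerSeries.C (q.coeff 0)) * S = ↑p := by
        rw [← Polynomial.coe_C, ← hqC]; exact hqS
      have hS : S = (q.coeff 0)⁻¹ • (↑p : PowerSeries ℂ) := by
        rw [← this, PowerSeries.smul_eq_C_mul, ← mul_assoc, ← map_mul,
          inv_mul_cancel₀ hc, map_one, one_mul]
      rw [hS]
      exact Submodule.smul_mem _ _ (poly_mem p)
    · -- q has positive degree: extract a root
      have hq_ne : q ≠ 0 := fun h => hq0 (by rw [h]; simp)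
      have hdeg' : 0 < q.degree := by
        rw [Polynomial.degree_eq_natDegree hq_ne, hdeg]
        exact_mod_cast hn
      obtain ⟨β, hβroot⟩ := Complex.exists_root hdeg'
      have hβ : β ≠ 0 := by
        intro h
        rw [h] at hβroot
        exact hq0 hβroot
      obtain ⟨q₂, hq₂⟩ := Polynomial.dvd_iff_isRoot.mpr hβroot
      set α : ℂ := β⁻¹ with hαdef
      have hα : α ≠ 0 := inv_ne_zero hβ
      have hαβ : α * β = 1 := inv_mul_cancel₀ hβ
      set q₁ : Polynomial ℂ := Polynomial.C (-β) * q₂ with hq₁def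
      have hlin : (1 - Polynomial.C α * Polynomial.X) * Polynomial.C (-β)
          = Polynomial.X - Polynomial.C β := by
        have h1 : Polynomial.C α * Polynomial.C (-β) = (-1 : Polynomial ℂ) := by
          rw [← Polynomial.C_mul, mul_neg, hαβ]
          simp
        calc (1 - Polynomial.C α * Polynomial.X) * Polynomial.C (-β)
            = Polynomial.C (-β) - (Polynomial.C α * Polynomial.C (-β)) * Polynomial.X := by
              ring
          _ = Polynomial.C (-β) + Polynomial.X := by rw [h1]; ring
          _ = Polynomial.X - Polynomial.C β := by rw [map_neg]; ring
      have hfac : q = (1 - Polynomial.C α * Polynomial.X) * q₁ := by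
        rw [hq₁def, ← mul_assoc, hlin, ← hq₂]
      have hq₁0 : Polynomial.eval 0 q₁ ≠ 0 := by
        intro h
        apply hq0
        rw [hfac, Polynomial.eval_mul, h, mul_zero]
      have hq₂ne : q₂ ≠ 0 := by
        intro h
        exact hq_ne (by rw [hq₂, h, mul_zero])
      have hq₁lt : q₁.natDegree < n := by
        have h1 : q.natDegree = 1 + q₂.natDegree := by
          rw [hq₂, Polynomial.natDegree_mul (Polynomial.X_sub_C_ne_zero β) hq₂ne,
            Polynomial.natDegree_X_sub_C]
        have h2 : q₁.natDegree = q₂.natDegree := by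
          rw [hq₁def, Polynomial.natDegree_C_mul (neg_ne_zero.mpr hβ)]
        omega
      set G : PowerSeries ℂ := 1 - PowerSeries.C α * PowerSeries.X with hGdef
      have hcoe : (↑q : PowerSeries ℂ) = G * ↑q₁ := by
        rw [hfac, Polynomial.coe_mul]
        congr 1
        simp [hGdef, Polynomial.coe_sub]
      have hT : (↑q₁ : PowerSeries ℂ) * (G * S) = ↑p := by
        rw [← hqS, hcoe]; ring
      have hTmem : G * S ∈ Msub := IH q₁.natDegree hq₁lt q₁ rfl hq₁0 p (G * S) hT
      have hSeq : S = G⁻¹ * (G * S) := by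
        rw [← mul_assoc, PowerSeries.inv_mul_cancel _ (by simp [hGdef]), one_mul]
      rw [hSeq]
      exact geom_mul_mem hα hTmem

/-- Every rational formal power series over `ℂ` lies in the `ℂ`-linear
span of the monomials `X^k` and of the powers `((1 − αX)⁻¹)^l` (`α ≠ 0`, `l ≥ 1`) of
geometric series. -/
theorem rational_power_series_mem_span_monomials_and_geometric_powers
    (S : PowerSeries ℂ) (p q : Polynomial ℂ)
    (hq0 : Polynomial.eval 0 q ≠ 0)
    (hqS : (↑q : PowerSeries ℂ) * S = ↑p) :
    S ∈ Submodule.span ℂ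
      ((Set.range fun k : ℕ => (PowerSeries.X : PowerSeries ℂ) ^ k) ∪
       {f : PowerSeries ℂ | ∃ α : ℂ, α ≠ 0 ∧ ∃ l : ℕ, 1 ≤ l ∧
          f = ((1 - PowerSeries.C α * PowerSeries.X)⁻¹) ^ l}) := by
  exact main_aux q.natDegree q rfl hq0 p S hqS
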